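/- Consider the 3-sequence, 3-period stepped-wedge analysis (the 4-period design with the final period excluded) with one cluster per sequence and exchangeable working correlation with parameter γ ∈ [0,1). Let Z be the 9×5 real design matrix of the calendar time indicator (CTI) model whose rows are indexed by pairs (i,j) with cluster i ∈ {1,2,3} and period j ∈ {1,2,3}, with columns (ξ_2, ξ_3, φ_1, φ_2, φ_3): in row (i,j), the ξ_c column equals 1 if j = c and j > i and 0 otherwise, and the φ_{j'} column equals 1 if j' = j and 0 otherwise. Let V = I_3 ⊗ R_3 with R_3 = (1−γ)·I_3 + γ·J_3 (J_3 the all-ones 3×3 matrix). Let μ ∈ ℝ⁹ have entries μ_{(i,j)} = 1{j > i}·δ_{j−i} + φ_j for arbitrary reals δ_1, δ_2, φ_1, φ_2, φ_3. Then V and ZᵀV⁻¹Z are invertible, and with β̂ = (ZᵀV⁻¹Z)⁻¹ZᵀV⁻¹μ the calendar time-averaged treatment effect estimator satisfies (β̂_{ξ_2} + β̂_{ξ_3})/2 = [(9γ² + 15γ + 6)·δ_1 + (−3γ² + γ + 2)·δ_2] / (2(3γ² + 8γ + 4)). -/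

import Mathlib

open Matrix

/-- Design matrix of the calendar time indicator (CTI) model for the 3-sequence,
3-period stepped-wedge analysis (the 4-period design with the final period excluded),
one cluster per sequence. Rows are indexed by `(i, j)` with cluster `i ∈ {1,2,3}`
(coded `Fin 3`, value `i.val + 1`) and period `j ∈ {1,2,3}` (coded `Fin 3`, value
`j.val + 1`); columns `0,1` are the calendar treatment indicators `ξ₂, ξ₃` and columns
`2,3,4` are the period indicators `φ₁, φ₂, φ₃`. -/
def ZCTI : Matrix (Fin 3 × Fin 3) (Fin 5) ℝ := fun p c =>
  let i : ℕ := (p.1 : ℕ) + 1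
  let j : ℕ := (p.2 : ℕ) + 1
  if (c : ℕ) < 2 then
    (if j = (c : ℕ) + 2 ∧ i < j then 1 else 0)
  else
    (if j = (c : ℕ) - 1 then 1 else 0)

/-- Block-diagonal exchangeable covariance `V = I₃ ⊗ R₃`, `R₃ = (1−γ)I₃ + γJ₃`. -/
def VexchCTI (γ : ℝ) : Matrix (Fin 3 × Fin 3) (Fin 3 × Fin 3) ℝ := fun p q =>
  if p.1 = q.1 then (if p.2 = q.2 then 1 else γ) else 0

/-- Vector of marginal cell means under a true exposure time-varying treatment effect
structure: cell `(i,j)` has mean `1{j>i}·δ_{j−i} + φ_j`. -/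
def muExp (δ φ : ℕ → ℝ) : (Fin 3 × Fin 3) → ℝ := fun p =>
  let i : ℕ := (p.1 : ℕ) + 1
  let j : ℕ := (p.2 : ℕ) + 1
  (if i < j then δ (j - i) else 0) + φ j

/-- The GLS coefficient vector `β̂ = (ZᵀV⁻¹Z)⁻¹ZᵀV⁻¹μ` of the CTI model applied to the
marginal cell means `μ`. -/
noncomputable def betaCTI (γ : ℝ) (δ φ : ℕ → ℝ) : Fin 5 → ℝ :=
  (ZCTIᵀ * (VexchCTI γ)⁻¹ * ZCTI)⁻¹ *ᵥ (ZCTIᵀ *ᵥ ((VexchCTI γ)⁻¹ *ᵥ muExp δ φ))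

/-! ### Auxiliary matrices -/

/-- Block all-ones matrix (within-cluster indicator). -/
def BblkAux : Matrix (Fin 3 × Fin 3) (Fin 3 × Fin 3) ℝ := fun p q =>
  if p.1 = q.1 then 1 else 0

def GmatAux : Matrix (Fin 5) (Fin 5) ℝ :=
  !![1,0,0,1,0; 0,2,0,0,2; 0,0,3,0,0; 1,0,0,3,0; 0,2,0,0,3]

def HmatAux : Matrix (Fin 5) (Fin 5) ℝ :=
  !![1,1,1,1,1; 1,2,2,2,2; 1,2,3,3,3; 1,2,3,3,3; 1,2,3,3,3]

def BZmatAux : Matrix (Fin 3 × Fin 3) (Fin 5) ℝ := fun p c =>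
  ![![1,1,1,1,1], ![0,1,1,1,1], ![0,0,1,1,1]] p.1 c

def NmatAux (γ : ℝ) : Matrix (Fin 5) (Fin 5) ℝ :=
  !![1+γ, -γ, -γ, 1+γ, -γ;
     -γ, 2+2*γ, -2*γ, -2*γ, 2+2*γ;
     -γ, -2*γ, 3+3*γ, -3*γ, -3*γ;
     1+γ, -2*γ, -3*γ, 3+3*γ, -3*γ;
     -γ, 2+2*γ, -3*γ, -3*γ, 3+3*γ]

def uvecAux (δ φ : ℕ → ℝ) : Fin 5 → ℝ :=
  ![δ 1 + φ 2, δ 1 + δ 2 + 2 * φ 3, 3 * φ 1, δ 1 + 3 * φ 2, δ 1 + δ 2 + 3 * φ 3]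

def bmuvecAux (δ φ : ℕ → ℝ) : (Fin 3 × Fin 3) → ℝ := fun p =>
  ![δ 1 + δ 2 + (φ 1 + φ 2 + φ 3), δ 1 + (φ 1 + φ 2 + φ 3), φ 1 + φ 2 + φ 3] p.1

def wvecAux (δ φ : ℕ → ℝ) : Fin 5 → ℝ :=
  ![δ 1 + δ 2 + (φ 1 + φ 2 + φ 3),
    2 * δ 1 + δ 2 + 2 * (φ 1 + φ 2 + φ 3),
    2 * δ 1 + δ 2 + 3 * (φ 1 + φ 2 + φ 3),
    2 * δ 1 + δ 2 + 3 * (φ 1 + φ 2 + φ 3),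
    2 * δ 1 + δ 2 + 3 * (φ 1 + φ 2 + φ 3)]

noncomputable def bvecAux (γ : ℝ) (δ φ : ℕ → ℝ) : Fin 5 → ℝ :=
  ![((6*γ^2+11*γ+4) * δ 1 - (3*γ^2+3*γ) * δ 2) / (3*γ^2+8*γ+4),
    ((3*γ^2+4*γ+2) * δ 1 + (4*γ+2) * δ 2) / (3*γ^2+8*γ+4),
    φ 1,
    (γ^2+γ) * (δ 2 - δ 1) / (3*γ^2+8*γ+4) + φ 2,
    γ^2 * (δ 2 - δ 1) / (3*γ^2+8*γ+4) + φ 3]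

/-! ### Structure lemmas -/

lemma hVdecomp (γ : ℝ) :
    VexchCTI γ = (1 - γ) • (1 : Matrix (Fin 3 × Fin 3) (Fin 3 × Fin 3) ℝ) + γ • BblkAux := by
  ext ⟨a, b⟩ ⟨c, d⟩
  by_cases h1 : a = c <;> by_cases h2 : b = d <;>
    simp [VexchCTI, BblkAux, Matrix.one_apply, Prod.ext_iff, h1, h2] <;> ring

lemma hBB : BblkAux * BblkAux = (3 : ℝ) • BblkAux := by
  ext ⟨a, b⟩ ⟨c, d⟩
  rw [Matrix.mul_apply, Fintype.sum_prod_type]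
  fin_cases a <;> fin_cases c <;>
    simp [BblkAux, Fin.sum_univ_three]

lemma hVmulM (γ : ℝ) :
    VexchCTI γ * ((1 + 2*γ) • (1 : Matrix (Fin 3 × Fin 3) (Fin 3 × Fin 3) ℝ) - γ • BblkAux)
      = ((1 - γ) * (1 + 2*γ)) • (1 : Matrix (Fin 3 × Fin 3) (Fin 3 × Fin 3) ℝ) := by
  rw [hVdecomp]
  simp only [Matrix.add_mul, Matrix.mul_sub, smul_mul_assoc, mul_smul_comm,
    Matrix.one_mul, Matrix.mul_one, hBB, smul_smul]
  module

lemma hG : ZCTIᵀ * ZCTI = GmatAux := by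
  ext r c
  rw [Matrix.mul_apply, Fintype.sum_prod_type]
  fin_cases r <;> fin_cases c <;>
    norm_num [ZCTI, GmatAux, Fin.sum_univ_three, -Finset.sum_boole] <;> norm_num [Fin.lt_def, Fin.ext_iff, Matrix.vecHead, Matrix.vecTail]

lemma hBZ : BblkAux * ZCTI = BZmatAux := by
  ext ⟨a, b⟩ c
  rw [Matrix.mul_apply, Fintype.sum_prod_type]
  fin_cases a <;> fin_cases c <;>
    norm_num [ZCTI, BblkAux, BZmatAux, Fin.sum_univ_three, -Finset.sum_boole] <;> norm_num [Fin.lt_def, Fin.ext_iff, Matrix.vecHead, Matrix.vecTail]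

lemma hH : ZCTIᵀ * BZmatAux = HmatAux := by
  ext r c
  rw [Matrix.mul_apply, Fintype.sum_prod_type]
  fin_cases r <;> fin_cases c <;>
    norm_num [ZCTI, BZmatAux, HmatAux, Fin.sum_univ_three, -Finset.sum_boole] <;> norm_num [Fin.lt_def, Fin.ext_iff, Matrix.vecHead, Matrix.vecTail, Matrix.cons_val_two]

lemma hNeq (γ : ℝ) : (1 + 2*γ) • GmatAux - γ • HmatAux = NmatAux γ := by
  ext r c
  fin_cases r <;> fin_cases c <;>
    (simp [GmatAux, HmatAux, NmatAux, Matrix.vecHead, Matrix.vecTail]; try ring)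

lemma hu (δ φ : ℕ → ℝ) : ZCTIᵀ *ᵥ muExp δ φ = uvecAux δ φ := by
  ext r
  rw [Matrix.mulVec, dotProduct, Fintype.sum_prod_type]
  fin_cases r <;>
    norm_num [ZCTI, muExp, uvecAux, Fin.sum_univ_three, -Finset.sum_boole] <;> norm_num [Fin.lt_def, Fin.ext_iff, Matrix.vecHead, Matrix.vecTail] <;> ring

lemma hBmu (δ φ : ℕ → ℝ) : BblkAux *ᵥ muExp δ φ = bmuvecAux δ φ := by
  ext ⟨a, b⟩
  rw [Matrix.mulVec, dotProduct, Fintype.sum_prod_type]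
  fin_cases a <;>
    norm_num [BblkAux, muExp, bmuvecAux, Fin.sum_univ_three, -Finset.sum_boole] <;> norm_num [Fin.lt_def, Fin.ext_iff, Matrix.vecHead, Matrix.vecTail] <;> ring

lemma hw (δ φ : ℕ → ℝ) : ZCTIᵀ *ᵥ bmuvecAux δ φ = wvecAux δ φ := by
  ext r
  rw [Matrix.mulVec, dotProduct, Fintype.sum_prod_type]
  fin_cases r <;>
    norm_num [ZCTI, bmuvecAux, wvecAux, Fin.sum_univ_three, -Finset.sum_boole] <;> norm_num [Fin.lt_def, Fin.ext_iff, Matrix.vecHead, Matrix.vecTail, Matrix.cons_val_two] <;> ring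

def CmatAux (γ : ℝ) : Matrix (Fin 5) (Fin 5) ℝ :=
  !![18+72*γ+54*γ^2-72*γ^3-72*γ^4, 9*γ+27*γ^2-36*γ^4, 0, -6-24*γ-18*γ^2+24*γ^3+24*γ^4, -6*γ-18*γ^2+24*γ^4;
     9*γ+27*γ^2-36*γ^4, 18+72*γ+54*γ^2-72*γ^3-72*γ^4, 0, -3*γ-9*γ^2+12*γ^4, -12-48*γ-36*γ^2+48*γ^3+48*γ^4;
     0, 0, 4+16*γ+19*γ^2+6*γ^3, 4*γ+16*γ^2+19*γ^3+6*γ^4, 4*γ+16*γ^2+19*γ^3+6*γ^4;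
     -6-24*γ-18*γ^2+24*γ^3+24*γ^4, -3*γ-9*γ^2+12*γ^4, 4*γ+16*γ^2+19*γ^3+6*γ^4, 6+24*γ+25*γ^2-2*γ^3-8*γ^4, 6*γ+22*γ^2+19*γ^3-2*γ^4;
     -6*γ-18*γ^2+24*γ^4, -12-48*γ-36*γ^2+48*γ^3+48*γ^4, 4*γ+16*γ^2+19*γ^3+6*γ^4, 6*γ+22*γ^2+19*γ^3-2*γ^4, 12+48*γ+43*γ^2-26*γ^3-32*γ^4]

set_option maxHeartbeats 1000000 in
lemma hNC (γ : ℝ) :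
    NmatAux γ * CmatAux γ
      = (3 * (1 - γ) * (1 + 2*γ)^2 * (3*γ^2 + 8*γ + 4)) • (1 : Matrix (Fin 5) (Fin 5) ℝ) := by
  ext r c
  fin_cases r <;> fin_cases c <;>
    (simp [NmatAux, CmatAux, Matrix.mul_apply, Fin.sum_univ_five, Matrix.one_apply,
       Matrix.vecHead, Matrix.vecTail]; try ring)

lemma hNb (γ : ℝ) (hD : 3*γ^2 + 8*γ + 4 ≠ 0) (δ φ : ℕ → ℝ) :
    NmatAux γ *ᵥ bvecAux γ δ φ = (1 + 2*γ) • uvecAux δ φ - γ • wvecAux δ φ := by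
  have hD' : γ * (γ * 3 + 8) + 4 ≠ 0 := by contrapose! hD; linear_combination hD
  ext r
  fin_cases r <;>
    (simp [NmatAux, bvecAux, uvecAux, wvecAux, Matrix.mulVec, dotProduct,
       Fin.sum_univ_five]; field_simp; ring)

/-- In the 3-sequence, 3-period stepped-wedge analysis with exchangeable working
correlation `γ ∈ [0,1)`, the misspecified CTATE (CTI-model GLS) estimator applied to an
exposure time-varying truth equals
`[(9γ²+15γ+6)δ₁ + (−3γ²+γ+2)δ₂]/(2(3γ²+8γ+4))`. -/
theorem CTATE_estimator_exposure_truth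
    (γ : ℝ) (hγ0 : 0 ≤ γ) (hγ1 : γ < 1) (δ φ : ℕ → ℝ) :
    IsUnit (VexchCTI γ).det ∧
    IsUnit (ZCTIᵀ * (VexchCTI γ)⁻¹ * ZCTI).det ∧
    (betaCTI γ δ φ 0 + betaCTI γ δ φ 1) / 2
      = ((9 * γ ^ 2 + 15 * γ + 6) * δ 1 + (-3 * γ ^ 2 + γ + 2) * δ 2) /
          (2 * (3 * γ ^ 2 + 8 * γ + 4)) := by
  have h1γ : (0:ℝ) < 1 - γ := by linarith
  have h2γ : (0:ℝ) < 1 + 2*γ := by linarith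
  have hD : (0:ℝ) < 3*γ^2 + 8*γ + 4 := by nlinarith
  have he : (1 - γ) * (1 + 2*γ) ≠ 0 := ne_of_gt (mul_pos h1γ h2γ)
  have hdN : (0:ℝ) < 3 * (1 - γ) * (1 + 2*γ)^2 * (3*γ^2 + 8*γ + 4) := by positivity
  have hDne : (3*γ^2 + 8*γ + 4 : ℝ) ≠ 0 := ne_of_gt hD
  have hdNne := ne_of_gt hdN
  -- inverse of V
  have hVW : VexchCTI γ *
      (((1 - γ) * (1 + 2*γ))⁻¹ • ((1 + 2*γ) • (1 : Matrix (Fin 3 × Fin 3) (Fin 3 × Fin 3) ℝ)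
        - γ • BblkAux)) = 1 := by
    rw [mul_smul_comm, hVmulM, smul_smul, inv_mul_cancel₀ he, one_smul]
  have hVunit : IsUnit (VexchCTI γ).det := Matrix.isUnit_det_of_right_inverse hVW
  have hVinv : (VexchCTI γ)⁻¹ =
      ((1 - γ) * (1 + 2*γ))⁻¹ • ((1 + 2*γ) • (1 : Matrix (Fin 3 × Fin 3) (Fin 3 × Fin 3) ℝ)
        - γ • BblkAux) := Matrix.inv_eq_right_inv hVW
  -- the GLS normal matrix
  have hA : ZCTIᵀ * (VexchCTI γ)⁻¹ * ZCTI = ((1 - γ) * (1 + 2*γ))⁻¹ • NmatAux γ := by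
    rw [hVinv, Matrix.mul_smul, Matrix.smul_mul, Matrix.mul_sub, Matrix.mul_smul,
      Matrix.mul_one, Matrix.mul_smul, Matrix.sub_mul, Matrix.smul_mul, Matrix.smul_mul,
      Matrix.mul_assoc, hBZ, hH, hG, hNeq]
  have hAright : (ZCTIᵀ * (VexchCTI γ)⁻¹ * ZCTI) *
      ((((1 - γ) * (1 + 2*γ)) * (3 * (1 - γ) * (1 + 2*γ)^2 * (3*γ^2 + 8*γ + 4))⁻¹) • CmatAux γ)
        = 1 := by
    rw [hA, Matrix.smul_mul, mul_smul_comm, hNC, smul_smul, smul_smul]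
    rw [show ((1 - γ) * (1 + 2*γ))⁻¹ * (((1 - γ) * (1 + 2*γ)) *
        (3 * (1 - γ) * (1 + 2*γ)^2 * (3*γ^2 + 8*γ + 4))⁻¹) *
        (3 * (1 - γ) * (1 + 2*γ)^2 * (3*γ^2 + 8*γ + 4)) = 1 by
      field_simp]
    rw [one_smul]
  have hAunit : IsUnit (ZCTIᵀ * (VexchCTI γ)⁻¹ * ZCTI).det :=
    Matrix.isUnit_det_of_right_inverse hAright
  refine ⟨hVunit, hAunit, ?_⟩
  -- the key identity: the candidate vector solves the normal equations
  have key : ZCTIᵀ *ᵥ ((VexchCTI γ)⁻¹ *ᵥ muExp δ φ)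
      = (ZCTIᵀ * (VexchCTI γ)⁻¹ * ZCTI) *ᵥ bvecAux γ δ φ := by
    rw [hA, hVinv, Matrix.smul_mulVec, Matrix.smul_mulVec, Matrix.sub_mulVec,
      Matrix.smul_mulVec, Matrix.smul_mulVec, Matrix.one_mulVec, hBmu,
      Matrix.mulVec_smul, Matrix.mulVec_sub, Matrix.mulVec_smul, Matrix.mulVec_smul,
      hu δ φ, hw δ φ, hNb γ hDne δ φ]
  have hbeta : betaCTI γ δ φ = bvecAux γ δ φ := by
    unfold betaCTI
    rw [key, Matrix.mulVec_mulVec, Matrix.nonsing_inv_mul _ hAunit, Matrix.one_mulVec]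
  rw [hbeta]
  show (((6*γ^2+11*γ+4) * δ 1 - (3*γ^2+3*γ) * δ 2) / (3*γ^2+8*γ+4)
      + ((3*γ^2+4*γ+2) * δ 1 + (4*γ+2) * δ 2) / (3*γ^2+8*γ+4)) / 2 = _
  field_simp
  ring
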